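/- Let k be a positive integer and let p be a pattern containing exactly k distinct variables. If p has length at least 2^k, then p is 4-avoidable; that is, there exist infinitely many words over a 4-letter alphabet having no factor that is an instance of p. -/

import Mathlib

open Finset
/-- A word `w` is an instance of the pattern `p` if there is a non-erasing
substitution (equivalently, a non-erasing monoid morphism on free monoids)
sending `p` to `w`. -/
def IsInstance {Δ α : Type*} (p : List Δ) (w : List α) : Prop :=
  ∃ f : Δ → List α, (∀ v, f v ≠ []) ∧ (p.map f).flatten = w

/-- A word `w` avoids the pattern `p` if no factor of `w` is an instance of `p`. -/
def Avoids {Δ α : Type*} (w : List α) (p : List Δ) : Prop :=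
  ∀ x : List α, x <:+: w → ¬ IsInstance p x



/-! ### List helpers -/

lemma flatten_eq_unique {α : Type*} : ∀ (L1 L2 : List (List α)),
    L1.map List.length = L2.map List.length → L1.flatten = L2.flatten → L1 = L2
  | [], [], _, _ => rfl
  | [], _ :: _, h, _ => by simp at h
  | _ :: _, [], h, _ => by simp at h
  | a :: L1, b :: L2, h, hf => by
    simp only [List.map_cons, List.cons.injEq] at h
    simp only [List.flatten_cons] at hf
    obtain ⟨rfl, rest⟩ : a = b ∧ L1.flatten = L2.flatten :=
      List.append_inj hf h.1
    exact congrArg _ (flatten_eq_unique L1 L2 h.2 rest)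

lemma sum_map_eq_fin {γ : Type*} (l : List γ) (g : γ → ℕ) :
    (l.map g).sum = ∑ i : Fin l.length, g l[i] := by
  have : l.map g = List.ofFn (fun i : Fin l.length => g l[i]) := by
    apply List.ext_getElem <;> simp
  rw [this, List.sum_ofFn]

/-- a factor consisting of two consecutive letters -/
lemma pair_infix {α : Type*} (l : List α) (i : ℕ) (h : i + 1 < l.length) :
    [l[i], l[i+1]] <:+: l := by
  have h1 : l.drop i = l[i] :: l.drop (i+1) := List.drop_eq_getElem_cons (by omega)
  have h2 : l.drop (i+1) = l[i+1] :: l.drop (i+2) := List.drop_eq_getElem_cons h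
  refine ⟨l.take i, l.drop (i+2), ?_⟩
  have : l.take i ++ [l[i], l[i+1]] ++ l.drop (i+2)
      = l.take i ++ l.drop i := by
    rw [h1, h2]; simp
  rw [this]; simp

lemma infix_suffix_of_not_take {α : Type*} {y w : List α} (hw : w ≠ [])
    (hy : y <:+: w) (hnot : ¬ y <:+: w.take (w.length - 1)) : y <:+ w := by
  obtain ⟨a, b, rfl⟩ := hy
  rcases b with _ | ⟨c, b⟩
  · exact ⟨a, by simp⟩
  · exfalso
    apply hnot
    have hlen : (a ++ y).length ≤ (a ++ y ++ c :: b).length - 1 := by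
      simp; omega
    have hpre : (a ++ y) <+: (a ++ y ++ c :: b).take ((a ++ y ++ c :: b).length - 1) := by
      rw [List.prefix_take_iff]
      exact ⟨by simp, hlen⟩
    have : y <:+: (a ++ y) := ⟨a, [], by simp⟩
    exact this.trans hpre.isInfix

section Infra
open Classical in
/-- all words of length `n` over `Fin 4` -/
noncomputable def Words (n : ℕ) : Finset (List (Fin 4)) :=
  (Finset.univ : Finset (Fin n → Fin 4)).image List.ofFn

lemma mem_Words {w : List (Fin 4)} {n : ℕ} : w ∈ Words n ↔ w.length = n := by
  constructor
  · rintro h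
    simp only [Words, mem_image] at h
    obtain ⟨f, -, rfl⟩ := h
    simp
  · rintro rfl
    simp only [Words, mem_image]
    exact ⟨w.get, mem_univ _, by simp [List.ofFn_getElem]⟩

lemma card_Words (n : ℕ) : (Words n).card = 4 ^ n := by
  rw [Words, Finset.card_image_of_injective _ (List.ofFn_injective)]
  simp [Finset.card_univ]

variable (P : List (Fin 4) → Prop)

open Classical in
noncomputable def AF (n : ℕ) : Finset (List (Fin 4)) := (Words n).filter P

open Classical in
lemma mem_AF {w : List (Fin 4)} {n : ℕ} : w ∈ AF P n ↔ w.length = n ∧ P w := by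
  simp [AF, mem_Words, Finset.mem_filter]

noncomputable def ExtF (n : ℕ) : Finset (List (Fin 4)) :=
  ((AF P n) ×ˢ (univ : Finset (Fin 4))).image fun x => x.1 ++ [x.2]

noncomputable def BadF (n : ℕ) : Finset (List (Fin 4)) := ExtF P n \ AF P (n+1)

lemma card_ExtF (n : ℕ) : (ExtF P n).card = 4 * (AF P n).card := by
  rw [ExtF, Finset.card_image_of_injective, Finset.card_product]
  · simp [mul_comm]
  · rintro ⟨w1, a1⟩ ⟨w2, a2⟩ h
    simp only at h
    have h1 := congrArg List.reverse h
    simp only [List.reverse_append, List.reverse_cons, List.reverse_nil,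
      List.nil_append, List.cons_append, List.cons.injEq] at h1
    obtain ⟨rfl, h2⟩ := h1
    have := congrArg List.reverse h2
    simp only [List.reverse_reverse] at this
    simp [this]

variable {P}

lemma AF_subset_ExtF (hP : ∀ w a, P (w ++ [a]) → P w) (n : ℕ) :
    AF P (n+1) ⊆ ExtF P n := by
  intro w hw
  rw [mem_AF] at hw
  have hne : w ≠ [] := by
    rintro rfl
    simp only [List.length_nil] at hw
    omega
  rw [ExtF, Finset.mem_image]
  refine ⟨(w.dropLast, w.getLast hne), ?_, by simp [List.dropLast_append_getLast hne]⟩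
  rw [Finset.mem_product, mem_AF]
  refine ⟨⟨by simp [hw.1], ?_⟩, mem_univ _⟩
  apply hP _ (w.getLast hne)
  rw [List.dropLast_append_getLast hne]
  exact hw.2

lemma card_AF_add_BadF (hP : ∀ w a, P (w ++ [a]) → P w) (n : ℕ) :
    (AF P (n+1)).card + (BadF P n).card = 4 * (AF P n).card := by
  rw [BadF, Finset.card_sdiff_of_subset (AF_subset_ExtF hP n), ← card_ExtF P n]
  have := Finset.card_le_card (AF_subset_ExtF hP n)
  omega

lemma mem_BadF {w : List (Fin 4)} {n : ℕ} (hw : w ∈ BadF P n) :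
    w.length = n + 1 ∧ P (w.take n) ∧ ¬ P w := by
  rw [BadF, Finset.mem_sdiff, ExtF, Finset.mem_image] at hw
  obtain ⟨⟨⟨u, a⟩, hu, rfl⟩, hnot⟩ := hw
  rw [Finset.mem_product, mem_AF] at hu
  obtain ⟨⟨hlen, hPu⟩, -⟩ := hu
  have h1 : (u ++ [a]).length = n + 1 := by simp [hlen]
  refine ⟨h1, ?_, ?_⟩
  · rw [← hlen, List.take_left]
    exact hPu
  · intro hPw
    exact hnot (by rw [mem_AF]; exact ⟨h1, hPw⟩)

/-- Rosenfeld induction wrapper. -/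
lemma growth (β γ : ℕ) (hβγ : β + γ = 4) (hnil : P [])
    (hP : ∀ w a, P (w ++ [a]) → P w)
    (hbad : ∀ n, (∀ j, j < n → β * (AF P j).card ≤ (AF P (j+1)).card) →
      (BadF P n).card ≤ γ * (AF P n).card) :
    ∀ n, β * (AF P n).card ≤ (AF P (n+1)).card := by
  intro n
  induction n using Nat.strong_induction_on with
  | _ n ih =>
    have hb := hbad n ih
    have hc := card_AF_add_BadF hP n
    have h4 : 4 * (AF P n).card = β * (AF P n).card + γ * (AF P n).card := by
      rw [← add_mul, hβγ]
    omega

lemma AF_pos (β γ : ℕ) (hβγ : β + γ = 4) (hβ : 1 ≤ β) (hnil : P [])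
    (hP : ∀ w a, P (w ++ [a]) → P w)
    (hbad : ∀ n, (∀ j, j < n → β * (AF P j).card ≤ (AF P (j+1)).card) →
      (BadF P n).card ≤ γ * (AF P n).card) :
    ∀ n, ∃ w : List (Fin 4), w.length = n ∧ P w := by
  intro n
  have hpos : 0 < (AF P n).card := by
    induction n with
    | zero =>
      refine Finset.card_pos.2 ⟨[], ?_⟩
      rw [mem_AF]; exact ⟨rfl, hnil⟩
    | succ n ihn =>
      have := growth β γ hβγ hnil hP hbad n
      calc 0 < β * (AF P n).card := by positivity
        _ ≤ _ := this
  obtain ⟨w, hw⟩ := Finset.card_pos.1 hpos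
  rw [mem_AF] at hw
  exact ⟨w, hw⟩

/-- chain power lemma -/
lemma chain_pow (A : ℕ → ℕ) (β : ℕ) :
    ∀ n, (∀ j, j < n → β * A j ≤ A (j+1)) → ∀ j, j ≤ n → β ^ (n - j) * A j ≤ A n := by
  intro n
  induction n with
  | zero => intro _ j hj; interval_cases j; simp
  | succ n ihn =>
    intro h j hj
    rcases Nat.eq_or_lt_of_le hj with rfl | hj'
    · simp
    · have hj'' : j ≤ n := by omega
      have h1 := ihn (fun j hj => h j (by omega)) j hj''
      have h2 := h n (by omega)
      calc β ^ (n + 1 - j) * A j = β * (β ^ (n - j) * A j) := by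
            rw [← mul_assoc, ← pow_succ']
            congr 2
            omega
        _ ≤ β * A n := Nat.mul_le_mul_left β h1
        _ ≤ A (n+1) := h2

/-- summed chain lemma for β = 2 -/
lemma chain_sum (A : ℕ → ℕ) :
    ∀ n, (∀ j, j < n → 2 * A j ≤ A (j+1)) → ∑ j ∈ Finset.range (n+1), A j ≤ 2 * A n := by
  intro n
  induction n with
  | zero => simp; omega
  | succ n ihn =>
    intro h
    rw [Finset.sum_range_succ]
    have h1 := ihn (fun j hj => h j (by omega))
    have h2 := h n (by omega)
    omega

end Infra

section Sq

def SqFree (w : List (Fin 4)) : Prop := ∀ u : List (Fin 4), u ≠ [] → ¬ (u ++ u <:+: w)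

lemma SqFree_infix {w y : List (Fin 4)} (h : SqFree w) (hy : y <:+: w) : SqFree y :=
  fun u hu hinf => h u hu (hinf.trans hy)

lemma SqFree_nil : SqFree ([] : List (Fin 4)) := by
  intro u hu hinf
  rw [List.infix_nil] at hinf
  exact hu (by rcases List.append_eq_nil_iff.1 hinf with ⟨h, -⟩; exact h)

lemma SqFree_step : ∀ (w : List (Fin 4)) a, SqFree (w ++ [a]) → SqFree w :=
  fun w a h => SqFree_infix h (w.prefix_append [a]).isInfix

lemma sq_bad (n : ℕ)
    (hchain : ∀ j, j < n → 2 * (AF SqFree j).card ≤ (AF SqFree (j+1)).card) :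
    (BadF SqFree n).card ≤ 2 * (AF SqFree n).card := by
  classical
  have hex : ∀ w ∈ BadF SqFree n, ∃ u : List (Fin 4), u ≠ [] ∧ u ++ u <:+ w := by
    intro w hw
    obtain ⟨hlen, htake, hnsq⟩ := mem_BadF hw
    rw [SqFree] at hnsq
    push_neg at hnsq
    obtain ⟨u, hu, hinf⟩ := hnsq
    refine ⟨u, hu, infix_suffix_of_not_take ?_ hinf ?_⟩
    · rintro rfl; simp at hlen
    · rw [hlen]
      simpa using htake u hu
  set g : List (Fin 4) → (Σ _ : ℕ, List (Fin 4)) := fun w =>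
    if h : ∃ u : List (Fin 4), u ≠ [] ∧ u ++ u <:+ w then
      ⟨(Classical.choose h).length, w.take (w.length - (Classical.choose h).length)⟩
    else ⟨0, []⟩ with hg
  have key : ∀ w ∈ BadF SqFree n,
      (g w).1 ∈ Finset.Icc 1 (n+1) ∧ (g w).2 ∈ AF SqFree (n + 1 - (g w).1) ∧
      w = (g w).2 ++ (g w).2.drop ((g w).2.length - (g w).1) := by
    intro w hw
    obtain ⟨hlen, htake, -⟩ := mem_BadF hw
    have h := hex w hw
    obtain ⟨hune, pre, hpre⟩ := Classical.choose_spec h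
    set u := Classical.choose h with husp
    have hul : 1 ≤ u.length := by
      rcases u with _ | _
      · exact absurd rfl hune
      · simp
    have hgw : g w = ⟨u.length, w.take (w.length - u.length)⟩ := by
      rw [hg]; simp only [dif_pos h]; rfl
    have hwl : w.length = pre.length + u.length + u.length := by
      rw [← hpre]; simp; omega
    have hQ : w.take (w.length - u.length) = pre ++ u := by
      have h1 : w.length - u.length = (pre ++ u).length := by simp; omega
      rw [h1, ← hpre, ← List.append_assoc, List.take_left]
    rw [hgw]
    dsimp only
    refine ⟨?_, ?_, ?_⟩
    · simp only [Finset.mem_Icc]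
      constructor
      · exact hul
      · omega
    · rw [mem_AF]
      constructor
      · simp; omega
      · apply SqFree_infix htake
        have hle : w.length - u.length ≤ n := by omega
        have hq2 : w.take (w.length - u.length) = (w.take n).take (w.length - u.length) := by
          rw [List.take_take, min_eq_left hle]
        rw [hq2]
        exact (List.take_prefix _ _).isInfix
    · rw [hQ]
      have h2 : (pre ++ u).length - u.length = pre.length := by simp
      rw [h2, List.drop_left, ← hpre, List.append_assoc]
  have hinj : (BadF SqFree n).card ≤
      ((Finset.Icc 1 (n+1)).sigma (fun t => AF SqFree (n + 1 - t))).card := by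
    apply Finset.card_le_card_of_injOn g
    · intro w hw
      obtain ⟨h1, h2, -⟩ := key w hw
      rw [Finset.mem_coe, Finset.mem_sigma]
      exact ⟨h1, h2⟩
    · intro w1 h1 w2 h2 heq
      obtain ⟨-, -, e1⟩ := key w1 h1
      obtain ⟨-, -, e2⟩ := key w2 h2
      rw [e1, e2, heq]
  have hcard : ((Finset.Icc 1 (n+1)).sigma (fun t => AF SqFree (n + 1 - t))).card
      = ∑ j ∈ Finset.range (n+1), (AF SqFree j).card := by
    rw [Finset.card_sigma]
    apply Finset.sum_nbij' (fun t => n + 1 - t) (fun j => n + 1 - j)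
    · intro t ht; simp only [Finset.mem_Icc] at ht; simp only [Finset.mem_range]; omega
    · intro j hj; simp only [Finset.mem_range] at hj; simp only [Finset.mem_Icc]; omega
    · intro t ht; simp only [Finset.mem_Icc] at ht; omega
    · intro j hj; simp only [Finset.mem_range] at hj; omega
    · intro t ht; rfl
  calc (BadF SqFree n).card ≤ _ := hinj
    _ = _ := hcard
    _ ≤ 2 * (AF SqFree n).card := chain_sum _ n hchain

lemma sqfree_words (n : ℕ) : ∃ w : List (Fin 4), w.length = n ∧ SqFree w :=
  AF_pos 2 2 rfl (by norm_num) SqFree_nil SqFree_step sq_bad n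

end Sq

section Doubled
variable {Δ : Type*} [DecidableEq Δ]

lemma avoids_infix {w y : List (Fin 4)} {q : List Δ} (h : Avoids w q) (hy : y <:+: w) :
    Avoids y q :=
  fun x hx => h x (hx.trans hy)

lemma avoids_nil {q : List Δ} (hq : q ≠ []) : Avoids ([] : List (Fin 4)) q := by
  intro x hx hinst
  rw [List.infix_nil] at hx
  subst hx
  obtain ⟨f, hf, hflat⟩ := hinst
  rcases q with _ | ⟨v, q⟩
  · exact hq rfl
  · rw [List.flatten_eq_nil_iff] at hflat
    exact hf v (hflat (f v) (by simp))

lemma avoids_step {q : List Δ} : ∀ (w : List (Fin 4)) a, Avoids (w ++ [a]) q → Avoids w q :=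
  fun w a h => avoids_infix h (w.prefix_append [a]).isInfix

/-- the length of an instance, grouped by variables -/
lemma weight_eq (q : List Δ) (f : Δ → List (Fin 4)) :
    ((q.map f).flatten).length
      = ∑ i : Fin q.dedup.length, q.count q.dedup[i] * (f q.dedup[i]).length := by
  rw [List.length_flatten, List.map_map]
  rw [show (List.length ∘ f) = (fun v => (f v).length) from rfl]
  rw [Finset.sum_list_map_count]
  have h1 : q.toFinset = q.dedup.toFinset := by
    symm
    apply List.toFinset_eq_iff_perm_dedup.mpr
    rw [List.dedup_idem]
  rw [h1, List.sum_toFinset _ (List.nodup_dedup q),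
    sum_map_eq_fin q.dedup (fun v => q.count v • (f v).length)]
  simp [smul_eq_mul]

lemma free_eq (q : List Δ) (f : Δ → List (Fin 4)) :
    ((q.dedup.map f).flatten).length = ∑ i : Fin q.dedup.length, (f q.dedup[i]).length := by
  rw [List.length_flatten, List.map_map, sum_map_eq_fin]
  rfl

lemma sum_count_dedup (q : List Δ) :
    ∑ i : Fin q.dedup.length, q.count q.dedup[i] = q.length := by
  have h1 : ∑ i : Fin q.dedup.length, q.count q.dedup[i]
      = (q.dedup.map (fun v => q.count v)).sum :=
    (sum_map_eq_fin q.dedup (fun v => q.count v)).symm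
  rw [h1, ← List.sum_toFinset _ (List.nodup_dedup q)]
  have h2 : q.dedup.toFinset = q.toFinset := by
    apply List.toFinset_eq_iff_perm_dedup.mpr
    rw [List.dedup_idem]
  rw [h2]
  exact List.sum_toFinset_count_eq_length q

lemma two_mul_add_one_le_two_pow (K : ℕ) (h : 3 ≤ K) : 2 * K + 1 ≤ 2 ^ K := by
  induction K with
  | zero => omega
  | succ K ih =>
    rcases Nat.lt_or_ge K 3 with h' | h'
    · interval_cases K <;> simp_all <;> omega
    · have := ih (by omega)
      have : 2 ^ K ≥ 4 := by
        calc 4 = 2^2 := rfl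
        _ ≤ 2^K := Nat.pow_le_pow_right (by norm_num) (by omega)
      rw [pow_succ]
      omega

lemma geom_factor_bound (m : ℕ) (hm : 2 ≤ m) (N : ℕ) :
    ∑ j ∈ Finset.Icc 1 N, ((4:ℚ)/3^m)^j ≤ 9/3^m := by
  set x : ℚ := 4/3^m with hx
  have hp : (0:ℚ) < 3^m := by positivity
  have hx0 : 0 ≤ x := by positivity
  have h9 : (9:ℚ) ≤ 3^m := by
    calc (9:ℚ) = 3^2 := by norm_num
    _ ≤ 3^m := by
      apply pow_le_pow_right₀ (by norm_num) hm
  have hx49 : x ≤ 4/9 := by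
    rw [hx, div_le_div_iff₀ hp (by norm_num)]
    nlinarith
  have hx1 : x < 1 := by linarith
  have h1 : ∑ j ∈ Finset.Icc 1 N, x^j ≤ x^1 / (1-x) := by
    rw [← Finset.Ico_add_one_right_eq_Icc]
    exact geom_sum_Ico_le_of_lt_one hx0 hx1
  have h2 : x^1 / (1-x) ≤ 9/3^m := by
    rw [div_le_div_iff₀ (by linarith) hp]
    have : x * 3^m = 4 := by rw [hx]; field_simp
    nlinarith
  linarith

lemma nat_arith (n s : ℕ) (h1 : 1 ≤ s) (h2 : s ≤ n+1) :
    (n+1-s ≤ n ∧ n - (n+1-s) = s-1 ∧ s = s-1+1) := by omega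

lemma db_bad (q : List Δ) (hd : ∀ v ∈ q, 2 ≤ q.count v) (hK3 : 3 ≤ q.dedup.length)
    (hlen : 2 ^ q.dedup.length ≤ q.length) (n : ℕ)
    (hchain : ∀ j, j < n →
      3 * (AF (fun w => Avoids w q) j).card ≤ (AF (fun w => Avoids w q) (j+1)).card) :
    (BadF (fun w => Avoids w q) n).card ≤ 1 * (AF (fun w => Avoids w q) n).card := by
  classical
  set P : List (Fin 4) → Prop := fun w => Avoids w q with hP
  have hKpos : 0 < q.dedup.length := by omega
  have hm2 : ∀ i : Fin q.dedup.length, 2 ≤ q.count q.dedup[i] := by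
    intro i
    apply hd
    exact (List.mem_dedup).1 (List.getElem_mem _)
  have hsumm : ∑ i : Fin q.dedup.length, q.count q.dedup[i] = q.length := sum_count_dedup q
  -- suffix instance existence
  have hex : ∀ w ∈ BadF P n,
      ∃ f : Δ → List (Fin 4), (∀ v, f v ≠ []) ∧ (q.map f).flatten <:+ w := by
    intro w hw
    obtain ⟨hlenw, htake, hnP⟩ := mem_BadF hw
    rw [hP] at hnP
    simp only [Avoids, not_forall, not_not] at hnP
    obtain ⟨x, hinf, f, hf, hflat⟩ := hnP
    refine ⟨f, hf, ?_⟩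
    rw [hflat]
    apply infix_suffix_of_not_take (by rintro rfl; simp at hlenw) hinf
    rw [hlenw]
    simp only [Nat.add_sub_cancel]
    intro hcon
    exact htake x hcon ⟨f, hf, hflat⟩
  set g : List (Fin 4) → (Σ _ : Fin q.dedup.length → ℕ, List (Fin 4) × List (Fin 4)) := fun w =>
    if h : ∃ f : Δ → List (Fin 4), (∀ v, f v ≠ []) ∧ (q.map f).flatten <:+ w then
      ⟨fun i => (Classical.choose h q.dedup[i]).length,
        ((q.dedup.map (Classical.choose h)).flatten,
          w.take (w.length - (q.map (Classical.choose h)).flatten.length))⟩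
    else ⟨fun _ => 0, ([], [])⟩ with hg
  have key : ∀ w ∈ BadF P n, ∃ f : Δ → List (Fin 4), (∀ v, f v ≠ []) ∧
      (q.map f).flatten <:+ w ∧
      g w = ⟨fun i => (f q.dedup[i]).length,
        ((q.dedup.map f).flatten, w.take (w.length - (q.map f).flatten.length))⟩ := by
    intro w hw
    have h := hex w hw
    obtain ⟨hf, hsuf⟩ := Classical.choose_spec h
    exact ⟨Classical.choose h, hf, hsuf, by rw [hg]; simp only [dif_pos h]⟩
  set M : Finset (Fin q.dedup.length → ℕ) :=
    (Fintype.piFinset fun _ : Fin q.dedup.length => Finset.Icc 1 (n+1)).filter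
      (fun μ => ∑ i, q.count q.dedup[i] * μ i ≤ n+1) with hM
  set T := M.sigma
    (fun μ => (Words (∑ i, μ i)) ×ˢ (AF P (n + 1 - ∑ i, q.count q.dedup[i] * μ i))) with hT
  -- basic facts about a suffix-instance witness
  have wfacts : ∀ w ∈ BadF P n, ∀ f : Δ → List (Fin 4), (∀ v, f v ≠ []) →
      (q.map f).flatten <:+ w →
      (1 ≤ (q.map f).flatten.length ∧ (q.map f).flatten.length ≤ n + 1 ∧
        w = w.take (w.length - (q.map f).flatten.length) ++ (q.map f).flatten) := by
    intro w hw f hf hsuf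
    obtain ⟨hlenw, -, -⟩ := mem_BadF hw
    obtain ⟨pre, hpre⟩ := hsuf
    have hlx : w.length = pre.length + (q.map f).flatten.length := by
      rw [← hpre]; simp
    have hne : (q.map f).flatten ≠ [] := by
      intro hcon
      rw [List.flatten_eq_nil_iff] at hcon
      rcases q with _ | ⟨v, q'⟩
      · simp at hK3
      · exact hf v (hcon (f v) (by simp))
    have h1 : 1 ≤ (q.map f).flatten.length := by
      have := List.length_pos_iff.2 hne
      omega
    refine ⟨h1, by omega, ?_⟩
    have h2 : w.length - (q.map f).flatten.length = pre.length := by omega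
    rw [h2, ← hpre, List.take_left]
  -- membership of the injection in the target
  have hmem : ∀ w ∈ BadF P n, g w ∈ T := by
    intro w hw
    obtain ⟨f, hf, hsuf, hgw⟩ := key w hw
    obtain ⟨h1, h2, -⟩ := wfacts w hw f hf hsuf
    obtain ⟨hlenw, htake, -⟩ := mem_BadF hw
    have hws : (q.map f).flatten.length
        = ∑ i : Fin q.dedup.length, q.count q.dedup[i] * (f q.dedup[i]).length :=
      weight_eq q f
    rw [hgw, hT, Finset.mem_sigma]
    dsimp only
    constructor
    · rw [hM, Finset.mem_filter]
      constructor
      · rw [Fintype.mem_piFinset]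
        intro i
        rw [Finset.mem_Icc]
        refine ⟨List.length_pos_iff.2 (hf q.dedup[i]), ?_⟩
        have hterm : q.count q.dedup[i] * (f q.dedup[i]).length
            ≤ ∑ j : Fin q.dedup.length, q.count q.dedup[j] * (f q.dedup[j]).length :=
          Finset.single_le_sum
            (f := fun j : Fin q.dedup.length => q.count q.dedup[j] * (f q.dedup[j]).length)
            (fun j _ => Nat.zero_le _) (Finset.mem_univ i)
        have hmi := hm2 i
        have : (f q.dedup[i]).length ≤ q.count q.dedup[i] * (f q.dedup[i]).length :=
          Nat.le_mul_of_pos_left _ (by omega)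
        omega
      · rw [← hws]
        omega
    · rw [Finset.mem_product]
      constructor
      · rw [mem_Words]
        exact free_eq q f
      · rw [mem_AF]
        constructor
        · rw [← hws, List.length_take]
          omega
        · have hle : w.length - (q.map f).flatten.length ≤ n := by omega
          have hq2 : w.take (w.length - (q.map f).flatten.length)
              = (w.take n).take (w.length - (q.map f).flatten.length) := by
            rw [List.take_take, min_eq_left hle]
          rw [hq2]
          exact avoids_infix htake (List.take_prefix _ _).isInfix
  -- injectivity
  have hinj : Set.InjOn g (BadF P n) := by
    intro w1 hw1 w2 hw2 heq
    obtain ⟨f1, hf1, hs1, hg1⟩ := key w1 hw1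
    obtain ⟨f2, hf2, hs2, hg2⟩ := key w2 hw2
    rw [hg1, hg2] at heq
    have hμ : (fun i : Fin q.dedup.length => (f1 q.dedup[i]).length)
        = (fun i : Fin q.dedup.length => (f2 q.dedup[i]).length) :=
      congrArg Sigma.fst heq
    have hFP : ((q.dedup.map f1).flatten, w1.take (w1.length - (q.map f1).flatten.length))
        = ((q.dedup.map f2).flatten, w2.take (w2.length - (q.map f2).flatten.length)) :=
      eq_of_heq (Sigma.mk.inj_iff.1 heq).2
    have hF : (q.dedup.map f1).flatten = (q.dedup.map f2).flatten := congrArg Prod.fst hFP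
    have hQ : w1.take (w1.length - (q.map f1).flatten.length)
        = w2.take (w2.length - (q.map f2).flatten.length) := congrArg Prod.snd hFP
    have hL : q.dedup.map f1 = q.dedup.map f2 := by
      apply flatten_eq_unique _ _ _ hF
      apply List.ext_getElem (by simp)
      intro i hi1 hi2
      simp only [List.getElem_map, List.length_map] at hi1 hi2 ⊢
      exact congrFun hμ ⟨i, by simpa using hi1⟩
    have hfeq : ∀ v ∈ q, f1 v = f2 v := by
      intro v hv
      have hvd : v ∈ q.dedup := List.mem_dedup.2 hv
      obtain ⟨i, hi, hgi⟩ := List.getElem_of_mem hvd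
      have h6 : (q.dedup.map f1)[i]'(by simpa using hi) = (q.dedup.map f2)[i]'(by simpa using hi) := by
        simp only [hL]
      simp only [List.getElem_map] at h6
      rw [← hgi]
      exact h6
    have hx : (q.map f1).flatten = (q.map f2).flatten :=
      congrArg List.flatten (List.map_congr_left hfeq)
    obtain ⟨-, -, e1⟩ := wfacts w1 hw1 f1 hf1 hs1
    obtain ⟨-, -, e2⟩ := wfacts w2 hw2 f2 hf2 hs2
    rw [e1, hQ, hx]
    exact e2.symm
  -- the counting bound
  have hcount : (BadF P n).card
      ≤ ∑ μ ∈ M, 4 ^ (∑ i, μ i) * (AF P (n + 1 - ∑ i, q.count q.dedup[i] * μ i)).card := by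
    have hc := Finset.card_le_card_of_injOn g hmem hinj
    rw [hT, Finset.card_sigma] at hc
    calc (BadF P n).card ≤ _ := hc
      _ = _ := by
        apply Finset.sum_congr rfl
        intro μ _
        rw [Finset.card_product, card_Words]
  -- the analytic estimate
  have hQle : ((BadF P n).card : ℚ) ≤ ((AF P n).card : ℚ) := by
    have hcast : ((BadF P n).card : ℚ)
        ≤ ∑ μ ∈ M, (4:ℚ) ^ (∑ i, μ i)
            * ((AF P (n + 1 - ∑ i, q.count q.dedup[i] * μ i)).card : ℚ) := by
      exact_mod_cast hcount
    have hterm : ∀ μ ∈ M, (4:ℚ) ^ (∑ i, μ i)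
          * ((AF P (n + 1 - ∑ i, q.count q.dedup[i] * μ i)).card : ℚ)
        ≤ ((AF P n).card : ℚ) * 3 * (∏ i, ((4:ℚ)/3^(q.count q.dedup[i]))^(μ i)) := by
      intro μ hμ
      rw [hM, Finset.mem_filter, Fintype.mem_piFinset] at hμ
      obtain ⟨hbox, hwle⟩ := hμ
      have hs1 : 1 ≤ ∑ i, q.count q.dedup[i] * μ i := by
        have hi0 : (1:ℕ) ≤ μ ⟨0, hKpos⟩ := (Finset.mem_Icc.1 (hbox ⟨0, hKpos⟩)).1
        have hm0 := hm2 ⟨0, hKpos⟩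
        have hterm0 : q.count q.dedup[(⟨0, hKpos⟩ : Fin q.dedup.length)] * μ ⟨0, hKpos⟩
            ≤ ∑ i, q.count q.dedup[i] * μ i :=
          Finset.single_le_sum
            (f := fun j : Fin q.dedup.length => q.count q.dedup[j] * μ j)
            (fun j _ => Nat.zero_le _) (Finset.mem_univ _)
        have h1 : 0 < q.count q.dedup[(⟨0, hKpos⟩ : Fin q.dedup.length)] * μ ⟨0, hKpos⟩ :=
          Nat.mul_pos (by linarith) (by linarith)
        exact le_trans h1 hterm0
      set s := ∑ i, q.count q.dedup[i] * μ i with hs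
      have harith := nat_arith n s hs1 hwle
      have hchainpow := chain_pow (fun j => (AF P j).card) 3 n hchain (n+1-s) harith.1
      rw [harith.2.1] at hchainpow
      have hc : ((3:ℚ))^(s-1) * ((AF P (n+1-s)).card : ℚ) ≤ ((AF P n).card : ℚ) := by
        exact_mod_cast hchainpow
      have hprod : (∏ i, ((4:ℚ)/3^(q.count q.dedup[i]))^(μ i))
          = (4:ℚ)^(∑ i, μ i) / 3^s := by
        rw [hs, ← Finset.prod_pow_eq_pow_sum, ← Finset.prod_pow_eq_pow_sum,
          ← Finset.prod_div_distrib]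
        apply Finset.prod_congr rfl
        intro i _
        rw [div_pow, ← pow_mul]
        norm_cast
      rw [hprod]
      have h3s : (0:ℚ) < 3^s := by positivity
      have h4 : (0:ℚ) ≤ (4:ℚ)^(∑ i, μ i) := by positivity
      have h3s' : (3:ℚ)^s = 3 * 3^(s-1) := by
        conv_lhs => rw [harith.2.2]
        rw [pow_succ']
      have hA' : ((AF P (n+1-s)).card : ℚ) ≤ ((AF P n).card : ℚ) * 3 / 3^s := by
        rw [le_div_iff₀ h3s, h3s']
        have h3sm : (0:ℚ) ≤ (3:ℚ)^(s-1) := by positivity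
        nlinarith [hc]
      calc (4:ℚ)^(∑ i, μ i) * ((AF P (n+1-s)).card : ℚ)
          ≤ (4:ℚ)^(∑ i, μ i) * (((AF P n).card : ℚ) * 3 / 3^s) :=
            mul_le_mul_of_nonneg_left hA' h4
        _ = ((AF P n).card : ℚ) * 3 * ((4:ℚ)^(∑ i, μ i) / 3^s) := by ring
    have hsum2 : ∑ μ ∈ M, (∏ i, ((4:ℚ)/3^(q.count q.dedup[i]))^(μ i))
        ≤ ∏ i : Fin q.dedup.length, ∑ j ∈ Finset.Icc 1 (n+1), ((4:ℚ)/3^(q.count q.dedup[i]))^j := by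
      rw [Finset.prod_univ_sum]
      apply Finset.sum_le_sum_of_subset_of_nonneg
      · rw [hM]; exact Finset.filter_subset _ _
      · intro μ _ _
        positivity
    have hsum3 : (∏ i : Fin q.dedup.length, ∑ j ∈ Finset.Icc 1 (n+1), ((4:ℚ)/3^(q.count q.dedup[i]))^j)
        ≤ ∏ i : Fin q.dedup.length, (9:ℚ)/3^(q.count q.dedup[i]) := by
      apply Finset.prod_le_prod
      · intro i _
        apply Finset.sum_nonneg
        intro j _
        positivity
      · intro i _
        exact geom_factor_bound _ (hm2 i) (n+1)
    have hsum4 : (∏ i : Fin q.dedup.length, (9:ℚ)/3^(q.count q.dedup[i])) ≤ 1/3 := by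
      rw [Finset.prod_div_distrib, Finset.prod_const, Finset.prod_pow_eq_pow_sum, hsumm]
      simp only [Finset.card_univ, Fintype.card_fin]
      rw [div_le_div_iff₀ (by positivity) (by norm_num)]
      have h9 : (9:ℚ)^q.dedup.length * 3 = 3^(2*q.dedup.length+1) := by
        rw [pow_add, pow_mul]
        norm_num
      rw [h9, one_mul]
      apply pow_le_pow_right₀ (by norm_num)
      have hle := two_mul_add_one_le_two_pow q.dedup.length hK3
      exact le_trans hle hlen
    calc ((BadF P n).card : ℚ)
        ≤ ∑ μ ∈ M, (4:ℚ)^(∑ i, μ i)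
            * ((AF P (n + 1 - ∑ i, q.count q.dedup[i] * μ i)).card : ℚ) := hcast
      _ ≤ ∑ μ ∈ M, ((AF P n).card : ℚ) * 3 * (∏ i, ((4:ℚ)/3^(q.count q.dedup[i]))^(μ i)) :=
          Finset.sum_le_sum hterm
      _ = ((AF P n).card : ℚ) * 3
            * ∑ μ ∈ M, (∏ i, ((4:ℚ)/3^(q.count q.dedup[i]))^(μ i)) := by
          rw [← Finset.mul_sum]
      _ ≤ ((AF P n).card : ℚ) * 3 * (1/3) := by
          apply mul_le_mul_of_nonneg_left (le_trans hsum2 (le_trans hsum3 hsum4))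
          positivity
      _ = ((AF P n).card : ℚ) := by ring
  rw [one_mul]
  exact_mod_cast hQle

lemma db_words (q : List Δ) (hd : ∀ v ∈ q, 2 ≤ q.count v) (hK3 : 3 ≤ q.dedup.length)
    (hlen : 2 ^ q.dedup.length ≤ q.length) :
    ∀ n, ∃ w : List (Fin 4), w.length = n ∧ Avoids w q :=
  AF_pos 3 1 rfl (by norm_num) (avoids_nil (by rintro rfl; simp at hK3)) avoids_step
    (db_bad q hd hK3 hlen)

end Doubled

section Glue
variable {Δ : Type*} [DecidableEq Δ]

lemma avoids_of_infix_pattern {w : List (Fin 4)} {p r : List Δ} (hr : r <:+: p)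
    (h : Avoids w r) : Avoids w p := by
  intro x hx hinst
  obtain ⟨f, hf, hflat⟩ := hinst
  obtain ⟨a, b, rfl⟩ := hr
  apply h ((r.map f).flatten) _ ⟨f, hf, rfl⟩
  have hsplit : (List.map f (a ++ r ++ b)).flatten
      = (a.map f).flatten ++ ((r.map f).flatten ++ (b.map f).flatten) := by
    simp [List.map_append, List.flatten_append]
  have hinfix : (r.map f).flatten <:+: x := by
    rw [← hflat, hsplit]
    exact ⟨(a.map f).flatten, (b.map f).flatten, by simp⟩
  exact hinfix.trans hx

lemma exists_doubled : ∀ (k : ℕ) (p : List Δ), p ≠ [] → p.toFinset.card ≤ k →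
    2 ^ p.toFinset.card ≤ p.length →
    ∃ q, q <:+: p ∧ q ≠ [] ∧ (∀ v ∈ q, 2 ≤ q.count v) ∧ 2 ^ q.toFinset.card ≤ q.length := by
  intro k
  induction k with
  | zero =>
    intro p hp hc _
    exfalso
    have : p.toFinset = ∅ := Finset.card_eq_zero.1 (by omega)
    rw [List.toFinset_eq_empty_iff] at this
    exact hp this
  | succ k ih =>
    intro p hp hc hlen
    by_cases hall : ∀ v ∈ p, 2 ≤ p.count v
    · exact ⟨p, List.infix_refl p, hp, hall, hlen⟩
    · push_neg at hall
      obtain ⟨v, hv, hcnt⟩ := hall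
      have hpos : 0 < p.count v := List.count_pos_iff.2 hv
      have hc1 : p.count v = 1 := by omega
      obtain ⟨a, b, rfl⟩ := List.append_of_mem hv
      have hsplit : (a ++ v :: b).count v = a.count v + (b.count v + 1) := by
        simp [List.count_append, List.count_cons]
      have hva : v ∉ a := by
        rw [← List.count_eq_zero]
        omega
      have hvb : v ∉ b := by
        rw [← List.count_eq_zero]
        omega
      have hcpos : 0 < (a ++ v :: b).toFinset.card :=
        Finset.card_pos.2 ⟨v, by simp⟩
      have hvmem : v ∈ (a ++ v :: b).toFinset := by simp
      have hcarda : a.toFinset.card ≤ (a ++ v :: b).toFinset.card - 1 := by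
        have hna : a.toFinset ⊆ (a ++ v :: b).toFinset.erase v := by
          intro x hx
          rw [Finset.mem_erase]
          refine ⟨?_, by simp [List.mem_toFinset.1 hx]⟩
          rintro rfl
          exact hva (List.mem_toFinset.1 hx)
        calc a.toFinset.card ≤ _ := Finset.card_le_card hna
          _ = _ := Finset.card_erase_of_mem hvmem
      have hcardb : b.toFinset.card ≤ (a ++ v :: b).toFinset.card - 1 := by
        have hnb : b.toFinset ⊆ (a ++ v :: b).toFinset.erase v := by
          intro x hx
          rw [Finset.mem_erase]
          refine ⟨?_, by simp [List.mem_toFinset.1 hx]⟩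
          rintro rfl
          exact hvb (List.mem_toFinset.1 hx)
        calc b.toFinset.card ≤ _ := Finset.card_le_card hnb
          _ = _ := Finset.card_erase_of_mem hvmem
      have hlen2 : 2 ^ ((a ++ v :: b).toFinset.card - 1) ≤ a.length
          ∨ 2 ^ ((a ++ v :: b).toFinset.card - 1) ≤ b.length := by
        by_contra hcon
        push_neg at hcon
        have h2c : 2 ^ (a ++ v :: b).toFinset.card
            = 2 ^ ((a ++ v :: b).toFinset.card - 1) + 2 ^ ((a ++ v :: b).toFinset.card - 1) := by
          rw [← two_mul, ← pow_succ']
          congr 1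
          omega
        have hll : (a ++ v :: b).length = a.length + b.length + 1 := by simp; omega
        omega
      have hppos : 0 < 2 ^ ((a ++ v :: b).toFinset.card - 1) := Nat.pow_pos (by norm_num)
      rcases hlen2 with h | h
      · have hane : a ≠ [] := by
          rintro rfl
          simp only [List.length_nil] at h
          omega
        obtain ⟨q, hq1, hq2, hq3, hq4⟩ := ih a hane (by omega)
          (le_trans (Nat.pow_le_pow_right (by norm_num) (by omega)) h)
        exact ⟨q, hq1.trans (List.prefix_append a (v :: b)).isInfix, hq2, hq3, hq4⟩
      · have hbne : b ≠ [] := by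
          rintro rfl
          simp only [List.length_nil] at h
          omega
        obtain ⟨q, hq1, hq2, hq3, hq4⟩ := ih b hbne (by omega)
          (le_trans (Nat.pow_le_pow_right (by norm_num) (by omega)) h)
        refine ⟨q, hq1.trans ?_, hq2, hq3, hq4⟩
        exact ⟨a ++ [v], [], by simp⟩

lemma two_of_card_le_two {s : Finset Δ} (h : s.card ≤ 2) {x y z : Δ}
    (hx : x ∈ s) (hy : y ∈ s) (hz : z ∈ s) (hxy : x ≠ y) (hyz : y ≠ z) : x = z := by
  by_contra hxz
  have hsub : ({x, y, z} : Finset Δ) ⊆ s := by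
    intro t ht
    simp only [Finset.mem_insert, Finset.mem_singleton] at ht
    rcases ht with rfl | rfl | rfl <;> assumption
  have hcard : ({x, y, z} : Finset Δ).card = 3 := by
    rw [Finset.card_insert_of_notMem (by simp [hxy, hxz]),
      Finset.card_insert_of_notMem (by simp [hyz]), Finset.card_singleton]
  have := Finset.card_le_card hsub
  omega

lemma small_case (q : List Δ) (hq : q ≠ []) (hK : q.toFinset.card ≤ 2)
    (hlen : 2 ^ q.toFinset.card ≤ q.length) :
    ∃ r : List Δ, r <:+: q ∧ ((∃ v, r = [v, v]) ∨ (∃ x y, r = [x, y, x, y])) := by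
  by_cases hadj : ∃ i : ℕ, ∃ h : i + 1 < q.length, q[i] = q[i+1]
  · obtain ⟨i, h, he⟩ := hadj
    refine ⟨[q[i], q[i+1]], pair_infix q i h, Or.inl ⟨q[i], by rw [he]⟩⟩
  · push_neg at hadj
    have hKpos : 0 < q.toFinset.card := by
      rcases q with _ | ⟨x, q'⟩
      · exact absurd rfl hq
      · exact Finset.card_pos.2 ⟨x, by simp⟩
    interval_cases hKc : q.toFinset.card
    · -- card = 1
      exfalso
      have hl2 : 2 ≤ q.length := by
        norm_num at hlen
        omega
      have h01 : q[0] = q[1] := by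
        apply Finset.card_le_one.1 (le_of_eq hKc) <;>
          exact List.mem_toFinset.2 (List.getElem_mem _)
      exact hadj 0 (by omega) h01
    · -- card = 2
      have hl4 : 4 ≤ q.length := by
        norm_num at hlen
        omega
      have hmem : ∀ (i : ℕ) (h : i < q.length), q[i] ∈ q.toFinset :=
        fun i h => List.mem_toFinset.2 (List.getElem_mem _)
      have h01 : q[0] ≠ q[1] := hadj 0 (by omega)
      have h12 : q[1] ≠ q[2] := hadj 1 (by omega)
      have h23 : q[2] ≠ q[3] := hadj 2 (by omega)
      have h02 : q[0] = q[2] :=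
        two_of_card_le_two (le_of_eq hKc) (hmem 0 (by omega)) (hmem 1 (by omega))
          (hmem 2 (by omega)) h01 h12
      have h13 : q[1] = q[3] :=
        two_of_card_le_two (le_of_eq hKc) (hmem 1 (by omega)) (hmem 2 (by omega))
          (hmem 3 (by omega)) h12 h23
      have htake : q.take 4 = [q[0], q[1], q[2], q[3]] := by
        apply List.ext_getElem
        · rw [List.length_take]
          simp
          omega
        · intro i h1 h2
          rw [List.length_take] at h1
          simp only [List.getElem_take]
          have h4 : i < 4 := by omega
          interval_cases i <;> simp
      refine ⟨[q[0], q[1], q[0], q[1]], ?_, Or.inr ⟨q[0], q[1], rfl⟩⟩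
      refine ⟨[], q.drop 4, ?_⟩
      rw [List.nil_append]
      nth_rewrite 2 [h02]
      nth_rewrite 2 [h13]
      rw [← htake, List.take_append_drop]

lemma instance_square {r : List Δ} (hr : (∃ v, r = [v, v]) ∨ (∃ x y, r = [x, y, x, y]))
    {x : List (Fin 4)} (hx : IsInstance r x) :
    ∃ u : List (Fin 4), u ≠ [] ∧ x = u ++ u := by
  obtain ⟨f, hf, hflat⟩ := hx
  rcases hr with ⟨v, rfl⟩ | ⟨a, b, rfl⟩
  · exact ⟨f v, hf v, by rw [← hflat]; simp⟩
  · refine ⟨f a ++ f b, by simp [hf a], ?_⟩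
    rw [← hflat]
    simp

lemma sqfree_avoids {r : List Δ} (hr : (∃ v, r = [v, v]) ∨ (∃ x y, r = [x, y, x, y]))
    {w : List (Fin 4)} (hsf : SqFree w) : Avoids w r := by
  intro x hx hinst
  obtain ⟨u, hu, rfl⟩ := instance_square hr hinst
  exact hsf u hu hx

end Glue

theorem avoid_four_of_length_ge_pow {Δ : Type*} [DecidableEq Δ]
    (k : ℕ) (hk : 0 < k) (p : List Δ) (hp : p ≠ [])
    (hvars : p.toFinset.card = k) (hlen : 2 ^ k ≤ p.length) :
    {w : List (Fin 4) | Avoids w p}.Infinite := by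
  obtain ⟨q, hq_inf, hq_ne, hq_d, hq_len⟩ :=
    exists_doubled p.toFinset.card p hp le_rfl (by rw [hvars]; exact hlen)
  have hall : ∀ n, ∃ w : List (Fin 4), w.length = n ∧ Avoids w p := by
    by_cases hK : q.toFinset.card ≤ 2
    · obtain ⟨r, hr_inf, hr_shape⟩ := small_case q hq_ne hK hq_len
      intro n
      obtain ⟨w, hwlen, hsf⟩ := sqfree_words n
      exact ⟨w, hwlen,
        avoids_of_infix_pattern hq_inf
          (avoids_of_infix_pattern hr_inf (sqfree_avoids hr_shape hsf))⟩
    · push_neg at hK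
      have hK3 : 3 ≤ q.dedup.length := by
        rw [← List.card_toFinset]
        omega
      intro n
      obtain ⟨w, hwlen, hav⟩ := db_words q hq_d hK3
        (by rw [← List.card_toFinset]; exact hq_len) n
      exact ⟨w, hwlen, avoids_of_infix_pattern hq_inf hav⟩
  choose f hf1 hf2 using hall
  apply Set.infinite_of_injective_forall_mem (f := f)
  · intro m n hmn
    rw [← hf1 m, ← hf1 n, hmn]
  · exact fun n => hf2 n
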